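/- Let A₀ be a real symmetric n×n matrix (n ≥ 1) all of whose eigenvalues lie in the interval [-k, k] for a fixed real k ≥ 0 (for example, the adjacency matrix of a k-regular graph), and define recursively A_{m+1} = fromBlocks A_m 1 1 A_m. Then for every ε > 0, the proportion of eigenvalues of A_N (counted with multiplicity, out of the total 2^N · n eigenvalues) whose absolute value is at least ε · (k + N) tends to 0 as N → ∞. Equivalently, the empirical spectral distribution of the normalized matrices W_N = A_N / (k + N) converges to the Dirac δ distribution at 0. -/

import Mathlib

/-- The index type of the `N`-fold iterated graph cylinder matrix over base index `V`. -/
def CylIdx (V : Type*) : ℕ → Type _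
  | 0 => V
  | N + 1 => CylIdx V N ⊕ CylIdx V N

instance instFintypeCylIdx (V : Type*) [Fintype V] : ∀ N, Fintype (CylIdx V N)
  | 0 => ‹Fintype V›
  | N + 1 => letI := instFintypeCylIdx V N
             inferInstanceAs (Fintype (CylIdx V N ⊕ CylIdx V N))

instance instDecidableEqCylIdx (V : Type*) [DecidableEq V] : ∀ N, DecidableEq (CylIdx V N)
  | 0 => ‹DecidableEq V›
  | N + 1 => letI := instDecidableEqCylIdx V N
             inferInstanceAs (DecidableEq (CylIdx V N ⊕ CylIdx V N))

/-- The iterated graph cylinder matrices: `A_{m+1} = [[A_m, I], [I, A_m]]`. -/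
def iterCyl {V : Type*} [DecidableEq V] {R : Type*} [CommRing R] (A₀ : Matrix V V R) :
    ∀ N : ℕ, Matrix (CylIdx V N) (CylIdx V N) R
  | 0 => A₀
  | N + 1 => Matrix.fromBlocks (iterCyl A₀ N) 1 1 (iterCyl A₀ N)

open Polynomial Matrix

section Aux

lemma det_fromBlocks_symmAux {m : Type*} [Fintype m] [DecidableEq m] {R : Type*} [CommRing R]
    (P Q : Matrix m m R) :
    (Matrix.fromBlocks P Q Q P).det = (P + Q).det * (P - Q).det := by
  have h : (Matrix.fromBlocks (1 : Matrix m m R) 1 0 1) * (Matrix.fromBlocks P Q Q P) *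
      (Matrix.fromBlocks (1 : Matrix m m R) (-1) 0 1) =
      Matrix.fromBlocks (P + Q) 0 Q (P - Q) := by
    simp [Matrix.fromBlocks_multiply, Matrix.mul_neg]
    abel_nf
    trivial
  have hd := congrArg Matrix.det h
  rw [Matrix.det_mul, Matrix.det_mul, Matrix.det_fromBlocks_zero₂₁,
    Matrix.det_fromBlocks_zero₂₁, Matrix.det_fromBlocks_zero₁₂, Matrix.det_one] at hd
  simpa using hd

lemma det_charmatrix_add_CAux {m : Type*} [Fintype m] [DecidableEq m] {R : Type*} [CommRing R]
    (A : Matrix m m R) (a : R) :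
    (charmatrix A + Polynomial.C a • (1 : Matrix m m R[X])).det
      = A.charpoly.comp (X + Polynomial.C a) := by
  have key : (Polynomial.aeval (X + Polynomial.C a) : R[X] →ₐ[R] R[X]).mapMatrix (charmatrix A)
      = charmatrix A + Polynomial.C a • (1 : Matrix m m R[X]) := by
    ext i j
    by_cases h : i = j
    · subst h; simp [Matrix.one_apply, charmatrix, Matrix.scalar_apply]
      ring
    · simp [Matrix.one_apply, h, charmatrix, Matrix.scalar_apply, Matrix.diagonal_apply_ne _ h]
  rw [← key, ← AlgHom.map_det]
  simp [Matrix.charpoly, Polynomial.comp, Polynomial.aeval_def]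

lemma charpoly_fromBlocks_symmAux {m : Type*} [Fintype m] [DecidableEq m] {R : Type*} [CommRing R]
    (A : Matrix m m R) :
    (Matrix.fromBlocks A (1 : Matrix m m R) 1 A).charpoly =
      A.charpoly.comp (X + Polynomial.C (-1)) * A.charpoly.comp (X + Polynomial.C 1) := by
  have h0 : (Matrix.fromBlocks A (1 : Matrix m m R) 1 A).charpoly =
      (charmatrix A - 1).det * (charmatrix A + 1).det := by
    rw [Matrix.charpoly, Matrix.charmatrix_fromBlocks]
    have h1 : (1 : Matrix m m R).map (Polynomial.C) = 1 := by
      ext i j; by_cases h : i = j <;> simp [Matrix.one_apply, h]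
    rw [h1, det_fromBlocks_symmAux]
    congr 2 <;> abel
  rw [h0]
  have e1 : charmatrix A - 1 = charmatrix A + Polynomial.C (-1 : R) • (1 : Matrix m m R[X]) := by
    rw [map_neg, neg_smul, Polynomial.C_1, one_smul, sub_eq_add_neg]
  have e2 : charmatrix A + 1 = charmatrix A + Polynomial.C (1 : R) • (1 : Matrix m m R[X]) := by
    rw [Polynomial.C_1, one_smul]
  rw [e1, e2, det_charmatrix_add_CAux, det_charmatrix_add_CAux]

lemma rootMultiplicity_comp_X_add_CAux {R : Type*} [CommRing R] (p : R[X]) (a b : R) :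
    (p.comp (X + C a)).rootMultiplicity b = p.rootMultiplicity (b + a) := by
  rw [rootMultiplicity_eq_rootMultiplicity (p := p.comp (X + C a)) (t := b),
    rootMultiplicity_eq_rootMultiplicity (p := p) (t := b + a)]
  congr 1
  rw [comp_assoc]
  congr 1
  simp [add_comp]
  ring

lemma roots_comp_X_add_CAux (p : ℝ[X]) (hp : p ≠ 0) (a : ℝ) :
    (p.comp (X + C a)).roots = p.roots.map (· - a) := by
  have hc : p.comp (X + C a) ≠ 0 := comp_X_add_C_ne_zero_iff.mpr hp
  ext b
  rw [count_roots, rootMultiplicity_comp_X_add_CAux]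
  have hinj : Function.Injective (fun x : ℝ => x - a) := fun x y h => by
    simpa using congrArg (· + a) h
  have : b = (b + a) - a := by ring
  rw [this, Multiset.count_map_eq_count' _ _ hinj, count_roots]
  norm_num

noncomputable def signSums : ℕ → Multiset ℝ
  | 0 => {0}
  | N + 1 => (signSums N).map (· + 1) + (signSums N).map (· - 1)

lemma card_signSums (N : ℕ) : Multiset.card (signSums N) = 2 ^ N := by
  induction N with
  | zero => rfl
  | succ N ih => simp [signSums, ih]; ring

lemma sum_sq_signSums (N : ℕ) :
    ((signSums N).map (fun s => s ^ 2)).sum = (N : ℝ) * 2 ^ N := by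
  induction N with
  | zero => simp [signSums]
  | succ N ih =>
    have h0 : ((signSums (N + 1)).map (fun s => s ^ 2)).sum
        = ((signSums N).map (fun s => (s + 1) ^ 2)).sum
          + ((signSums N).map (fun s => (s - 1) ^ 2)).sum := by
      simp [signSums, Multiset.map_map, Function.comp]
    rw [h0, ← Multiset.sum_map_add]
    have h1 : ((signSums N).map (fun s => (s + 1) ^ 2 + (s - 1) ^ 2)).sum
        = ((signSums N).map (fun s => 2 * s ^ 2 + 2)).sum := by
      congr 1; apply Multiset.map_congr rfl; intro s _; ring
    rw [h1, Multiset.sum_map_add]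
    have h2 : ((signSums N).map (fun s : ℝ => (2 : ℝ))).sum = (2 : ℝ) ^ (N + 1) := by
      rw [Multiset.map_const', Multiset.sum_replicate, card_signSums]
      push_cast; ring
    have h3 : ((signSums N).map (fun s => 2 * s ^ 2)).sum = 2 * ((N : ℝ) * 2 ^ N) := by
      rw [Multiset.sum_map_mul_left]
      simp [ih]
    rw [h2, h3]
    push_cast; ring

lemma roots_iterCyl {n : ℕ} (A₀ : Matrix (Fin n) (Fin n) ℝ) :
    ∀ N, (iterCyl A₀ N).charpoly.roots
      = A₀.charpoly.roots.bind (fun r => (signSums N).map (r + ·))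
  | 0 => by
    simp only [signSums, iterCyl]
    have : ∀ r : ℝ, (({0} : Multiset ℝ).map (r + ·)) = {r} := by intro r; simp
    simp only [this]
    rw [show (fun r : ℝ => ({r} : Multiset ℝ)) = fun r => {id r} from rfl,
      Multiset.bind_singleton, Multiset.map_id]
    rfl
  | N + 1 => by
    have hp : (iterCyl A₀ N).charpoly ≠ 0 := (Matrix.charpoly_monic _).ne_zero
    have h1 : (iterCyl A₀ (N + 1)).charpoly
        = (iterCyl A₀ N).charpoly.comp (X + C (-1)) * (iterCyl A₀ N).charpoly.comp (X + C 1) :=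
      charpoly_fromBlocks_symmAux _
    have hne : (iterCyl A₀ N).charpoly.comp (X + C (-1)) ≠ 0 :=
      comp_X_add_C_ne_zero_iff.mpr hp
    have hne2 : (iterCyl A₀ N).charpoly.comp (X + C 1) ≠ 0 :=
      comp_X_add_C_ne_zero_iff.mpr hp
    rw [h1, Polynomial.roots_mul (mul_ne_zero hne hne2),
      roots_comp_X_add_CAux _ hp, roots_comp_X_add_CAux _ hp,
      roots_iterCyl A₀ N]
    rw [Multiset.map_bind, Multiset.map_bind, ← Multiset.bind_add]
    apply Multiset.bind_congr fun r _ => ?_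
    show _ = (signSums (N + 1)).map (r + ·)
    simp only [signSums, Multiset.map_add, Multiset.map_map, Function.comp]
    congr 1
    · apply Multiset.map_congr rfl; intro s _; ring
    · apply Multiset.map_congr rfl; intro s _; ring

lemma card_filter_bindAux {α β : Type*} (s : Multiset α) (g : α → Multiset β)
    (P : β → Prop) [DecidablePred P] :
    Multiset.card ((s.bind g).filter P)
      = (s.map (fun a => Multiset.card ((g a).filter P))).sum := by
  induction s using Multiset.induction with
  | empty => simp
  | cons a s ih => simp [Multiset.cons_bind, Multiset.filter_add, ih]

lemma chebAux (S : Multiset ℝ) (c : ℝ) (hc : 0 ≤ c) :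
    (Multiset.card (S.filter (fun s => c ≤ |s|)) : ℝ) * c ^ 2
      ≤ (S.map (fun s => s ^ 2)).sum := by
  set F := S.filter (fun s => c ≤ |s|) with hF
  have h1 : (Multiset.card F : ℝ) * c ^ 2 = (F.map (fun _ => c ^ 2)).sum := by
    rw [Multiset.map_const', Multiset.sum_replicate, nsmul_eq_mul]
  have h2 : (F.map (fun _ => c ^ 2)).sum ≤ (F.map (fun s => s ^ 2)).sum := by
    apply Multiset.sum_map_le_sum_map
    intro s hs
    have hcs : c ≤ |s| := (Multiset.mem_filter.mp hs).2
    calc c ^ 2 ≤ |s| ^ 2 := by apply pow_le_pow_left₀ hc hcs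
    _ = s ^ 2 := sq_abs s
  have h3 : (F.map (fun s => s ^ 2)).sum ≤ (S.map (fun s => s ^ 2)).sum := by
    have hle : F.map (fun s => s ^ 2) ≤ S.map (fun s => s ^ 2) :=
      Multiset.map_le_map (Multiset.filter_le _ S)
    obtain ⟨u, hu⟩ := Multiset.le_iff_exists_add.mp hle
    have hu0 : (0:ℝ) ≤ u.sum := by
      apply Multiset.sum_nonneg
      intro x hx
      have : x ∈ S.map (fun s => s ^ 2) := by rw [hu]; exact Multiset.mem_add.mpr (Or.inr hx)
      obtain ⟨s, _, rfl⟩ := Multiset.mem_map.mp this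
      positivity
    rw [hu, Multiset.sum_add]
    linarith
  linarith

end Aux

/-- The proportion of eigenvalues of the iterated graph cylinder matrix that are at least
`ε * (k + N)` in absolute value tends to `0`: the empirical spectral distribution of the
normalized matrices `W_N = A_N / (k + N)` converges to the Dirac δ at `0`. -/
theorem iterCyl_normalized_spectrum_tendsto_delta {n : ℕ} (hn : 1 ≤ n)
    (A₀ : Matrix (Fin n) (Fin n) ℝ) (hsym : A₀.IsSymm)
    (k : ℝ) (hk : 0 ≤ k)
    (hbound : ∀ x ∈ A₀.charpoly.roots, x ∈ Set.Icc (-k) k)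
    (ε : ℝ) (hε : 0 < ε) :
    Filter.Tendsto
      (fun N : ℕ =>
        ((((iterCyl A₀ N).charpoly.roots.filter (fun x => ε * (k + N) ≤ |x|)).card : ℝ) /
          ((2 ^ N * n : ℕ) : ℝ)))
      Filter.atTop (nhds 0) := by
  classical
  set R₀ := A₀.charpoly.roots with hR₀
  have hcard₀ : Multiset.card R₀ ≤ n := by
    refine le_trans (Polynomial.card_roots' _) ?_
    rw [Matrix.charpoly_natDegree_eq_dim]
    simp
  -- key counting bound
  have key : ∀ N : ℕ, 0 ≤ ε * (k + N) - k →
      (Multiset.card ((iterCyl A₀ N).charpoly.roots.filter (fun x => ε * (k + N) ≤ |x|)) : ℝ)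
        * (ε * (k + N) - k) ^ 2 ≤ (n : ℝ) * ((N : ℝ) * 2 ^ N) := by
    intro N hc
    set c := ε * (k + N) - k with hcdef
    set B := Multiset.card ((signSums N).filter (fun s => c ≤ |s|)) with hB
    have hterm : ∀ r ∈ R₀,
        Multiset.card ((((signSums N).map (r + ·)).filter (fun x => ε * (k + N) ≤ |x|))) ≤ B := by
      intro r hr
      have hrk : |r| ≤ k := abs_le.mpr ⟨(hbound r hr).1, (hbound r hr).2⟩
      rw [Multiset.filter_map, Multiset.card_map]
      refine Multiset.card_le_card (Multiset.monotone_filter_right _ ?_)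
      intro x hx
      have habs : |r + x| ≤ |r| + |x| := abs_add_le r x
      simp only [Function.comp] at hx ⊢
      linarith
    have hcount : Multiset.card
          ((iterCyl A₀ N).charpoly.roots.filter (fun x => ε * (k + N) ≤ |x|)) ≤ n * B := by
      rw [roots_iterCyl A₀ N, card_filter_bindAux]
      calc (R₀.map (fun r =>
            Multiset.card ((((signSums N).map (r + ·)).filter (fun x => ε * (k + N) ≤ |x|))))).sum
          ≤ Multiset.card (R₀.map (fun r =>
            Multiset.card ((((signSums N).map (r + ·)).filter (fun x => ε * (k + N) ≤ |x|))))) • B := by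
            apply Multiset.sum_le_card_nsmul
            intro x hx
            obtain ⟨r, hr, rfl⟩ := Multiset.mem_map.mp hx
            exact hterm r hr
        _ = Multiset.card R₀ * B := by rw [Multiset.card_map, smul_eq_mul]
        _ ≤ n * B := Nat.mul_le_mul_right _ hcard₀
    have hcheb : (B : ℝ) * c ^ 2 ≤ (N : ℝ) * 2 ^ N := by
      have := chebAux (signSums N) c hc
      rwa [sum_sq_signSums] at this
    have hcast : (Multiset.card
          ((iterCyl A₀ N).charpoly.roots.filter (fun x => ε * (k + N) ≤ |x|)) : ℝ)
        ≤ (n : ℝ) * (B : ℝ) := by exact_mod_cast hcount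
    have hBnn : (0:ℝ) ≤ (B:ℝ) := by positivity
    have hnnn : (0:ℝ) ≤ (n:ℝ) := by positivity
    nlinarith [sq_nonneg c]
  -- the limit
  have hN0 : Filter.Tendsto (fun N : ℕ => (4 / ε ^ 2) * (1 / (N:ℝ))) Filter.atTop (nhds 0) := by
    have := tendsto_one_div_atTop_nhds_zero_nat.const_mul (4 / ε ^ 2)
    simpa using this
  apply squeeze_zero' ?_ ?_ hN0
  · filter_upwards with N
    have hpos : (0:ℝ) < ((2 ^ N * n : ℕ) : ℝ) := by
      have : 0 < 2 ^ N * n := Nat.mul_pos (Nat.pow_pos (by norm_num)) hn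
      exact_mod_cast this
    positivity
  · filter_upwards [Filter.eventually_ge_atTop (max 1 ⌈2 * k / ε⌉₊)] with N hN
    have hN1 : 1 ≤ N := le_trans (le_max_left _ _) hN
    have hN1R : (1:ℝ) ≤ (N:ℝ) := by exact_mod_cast hN1
    have hNk : 2 * k / ε ≤ (N:ℝ) := by
      have := le_trans (le_max_right 1 ⌈2 * k / ε⌉₊) hN
      exact le_trans (Nat.le_ceil _) (by exact_mod_cast this)
    have hNk' : 2 * k ≤ ε * N := by
      rw [div_le_iff₀ hε] at hNk; linarith
    have hc2 : ε * N / 2 ≤ ε * (k + N) - k := by nlinarith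
    have hcpos : 0 < ε * (k + N) - k := by nlinarith
    have hkey := key N (le_of_lt hcpos)
    have hpos : (0:ℝ) < ((2 ^ N * n : ℕ) : ℝ) := by
      have : 0 < 2 ^ N * n := Nat.mul_pos (Nat.pow_pos (by norm_num)) hn
      exact_mod_cast this
    have hposd : (0:ℝ) < ε ^ 2 * N := by positivity
    set card := (Multiset.card
      ((iterCyl A₀ N).charpoly.roots.filter (fun x => ε * (k + N) ≤ |x|)) : ℝ) with hcdd
    have hcard0 : (0:ℝ) ≤ card := by positivity
    have hcsq : (ε * N / 2) ^ 2 ≤ (ε * (k + N) - k) ^ 2 :=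
      pow_le_pow_left₀ (by positivity) hc2 2
    have h5 : card * (ε * N / 2) ^ 2 ≤ (n:ℝ) * ((N:ℝ) * 2 ^ N) :=
      le_trans (mul_le_mul_of_nonneg_left hcsq hcard0) hkey
    have hrhs : (4 / ε ^ 2) * (1 / (N:ℝ)) = 4 / (ε ^ 2 * N) := by
      rw [div_mul_div_comm, mul_one]
    rw [hrhs, div_le_div_iff₀ hpos hposd]
    have hNpos : (0:ℝ) < (N:ℝ) := lt_of_lt_of_le zero_lt_one hN1R
    have hD : ((2 ^ N * n : ℕ) : ℝ) = (2:ℝ) ^ N * n := by push_cast; ring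
    rw [hD]
    have h6 : card * (ε ^ 2 * N) * N ≤ 4 * ((2:ℝ) ^ N * n) * N := by nlinarith [h5]
    exact le_of_mul_le_mul_right h6 hNpos
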